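/- Let F be an algebraically closed field, f(ξ) ∈ F[ξ] a nonzero polynomial of degree n > 1 with zero constant term, and c an element of the split octonion algebra O over F. If there exist γ₁ ≠ γ₂ in F and an F-algebra automorphism g of O with g(c) = γ₁·e₁ + γ₂·e₂, then the set X = {x ∈ O : f(x) = c} is nonempty and has at most n² elements. -/
import Mathlib


noncomputable section

/-- The split octonion algebra over `F`, given by Zorn vector matrices
`(x1, u; v, x2)` with `x1, x2 ∈ F` and `u, v ∈ F³`. -/
@[ext]
structure SplitOctonion (F : Type*) where
  x1 : F
  u : Fin 3 → F
  v : Fin 3 → F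
  x2 : F

namespace SplitOctonion

variable {F : Type*} [Field F]

/-- Dot product on `F³`. -/
def dot (x y : Fin 3 → F) : F := x 0 * y 0 + x 1 * y 1 + x 2 * y 2

/-- Cross product on `F³`. -/
def cross (x y : Fin 3 → F) : Fin 3 → F :=
  ![x 1 * y 2 - x 2 * y 1, x 2 * y 0 - x 0 * y 2, x 0 * y 1 - x 1 * y 0]

instance : Zero (SplitOctonion F) := ⟨⟨0, 0, 0, 0⟩⟩
instance : One (SplitOctonion F) := ⟨⟨1, 0, 0, 1⟩⟩
instance : Add (SplitOctonion F) :=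
  ⟨fun x y => ⟨x.x1 + y.x1, x.u + y.u, x.v + y.v, x.x2 + y.x2⟩⟩
instance : Neg (SplitOctonion F) := ⟨fun x => ⟨-x.x1, -x.u, -x.v, -x.x2⟩⟩
instance : SMul F (SplitOctonion F) :=
  ⟨fun c x => ⟨c * x.x1, c • x.u, c • x.v, c * x.x2⟩⟩

/-- Zorn vector matrix multiplication. -/
instance : Mul (SplitOctonion F) :=
  ⟨fun x y => ⟨x.x1 * y.x1 + dot x.u y.v,
    x.x1 • y.u + y.x2 • x.u - cross x.v y.v,
    y.x1 • x.v + x.x2 • y.v + cross x.u y.u,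
    x.x2 * y.x2 + dot x.v y.u⟩⟩

@[simp] lemma zero_x1 : (0 : SplitOctonion F).x1 = 0 := rfl
@[simp] lemma zero_u : (0 : SplitOctonion F).u = 0 := rfl
@[simp] lemma zero_v : (0 : SplitOctonion F).v = 0 := rfl
@[simp] lemma zero_x2 : (0 : SplitOctonion F).x2 = 0 := rfl
@[simp] lemma add_x1 (x y : SplitOctonion F) : (x + y).x1 = x.x1 + y.x1 := rfl
@[simp] lemma add_u (x y : SplitOctonion F) : (x + y).u = x.u + y.u := rfl
@[simp] lemma add_v (x y : SplitOctonion F) : (x + y).v = x.v + y.v := rfl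
@[simp] lemma add_x2 (x y : SplitOctonion F) : (x + y).x2 = x.x2 + y.x2 := rfl
@[simp] lemma neg_x1 (x : SplitOctonion F) : (-x).x1 = -x.x1 := rfl
@[simp] lemma neg_u (x : SplitOctonion F) : (-x).u = -x.u := rfl
@[simp] lemma neg_v (x : SplitOctonion F) : (-x).v = -x.v := rfl
@[simp] lemma neg_x2 (x : SplitOctonion F) : (-x).x2 = -x.x2 := rfl
@[simp] lemma smul_x1 (c : F) (x : SplitOctonion F) : (c • x).x1 = c * x.x1 := rfl
@[simp] lemma smul_u (c : F) (x : SplitOctonion F) : (c • x).u = c • x.u := rfl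
@[simp] lemma smul_v (c : F) (x : SplitOctonion F) : (c • x).v = c • x.v := rfl
@[simp] lemma smul_x2 (c : F) (x : SplitOctonion F) : (c • x).x2 = c * x.x2 := rfl

instance : AddCommGroup (SplitOctonion F) where
  add_assoc x y z := by ext <;> simp [add_assoc]
  zero_add x := by ext <;> simp
  add_zero x := by ext <;> simp
  add_comm x y := by ext <;> simp [add_comm]
  neg_add_cancel x := by ext <;> simp
  nsmul := nsmulRec
  zsmul := zsmulRec

instance : Module F (SplitOctonion F) where
  one_smul x := by ext <;> simp
  mul_smul c d x := by ext <;> simp [mul_assoc, mul_smul]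
  smul_zero c := by ext <;> simp
  smul_add c x y := by ext <;> simp [mul_add, smul_add]
  add_smul c d x := by ext <;> simp [add_mul, add_smul]
  zero_smul x := by ext <;> simp

/-- Powers of a single octonion (well defined by power-associativity). -/
def npow (x : SplitOctonion F) : ℕ → SplitOctonion F
  | 0 => 1
  | n + 1 => npow x n * x

instance : Pow (SplitOctonion F) ℕ := ⟨npow⟩

/-- Substitution of an octonion into a polynomial over `F`:
`f(x) = αₙ xⁿ + ⋯ + α₁ x + α₀ • 1`. -/
def peval (f : Polynomial F) (x : SplitOctonion F) : SplitOctonion F :=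
  f.sum fun i c => c • x ^ i

/-- The octonion `e₁`. -/
def e1 : SplitOctonion F := ⟨1, 0, 0, 0⟩
/-- The octonion `e₂`. -/
def e2 : SplitOctonion F := ⟨0, 0, 0, 1⟩
/-- The octonion `u₁`. -/
def u1 : SplitOctonion F := ⟨0, ![1, 0, 0], 0, 0⟩

/-- Conjugation on `O`. -/
def conj (x : SplitOctonion F) : SplitOctonion F := ⟨x.x2, -x.u, -x.v, x.x1⟩

/-- The norm of an octonion. -/
def normO (x : SplitOctonion F) : F := x.x1 * x.x2 - dot x.u x.v

/-- The trace of an octonion. -/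
def trO (x : SplitOctonion F) : F := x.x1 + x.x2

/-- `g` is an `F`-algebra automorphism of `O`: a linear bijection preserving
multiplication (and the unit). -/
def IsAlgAut (g : SplitOctonion F ≃ₗ[F] SplitOctonion F) : Prop :=
  g 1 = 1 ∧ ∀ x y, g (x * y) = g x * g y

end SplitOctonion
namespace SplitOctonion

variable {F : Type*} [Field F]

@[simp] lemma mul_x1' (x y : SplitOctonion F) :
    (x * y).x1 = x.x1 * y.x1 + dot x.u y.v := rfl
@[simp] lemma mul_u' (x y : SplitOctonion F) :
    (x * y).u = x.x1 • y.u + y.x2 • x.u - cross x.v y.v := rfl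
@[simp] lemma mul_v' (x y : SplitOctonion F) :
    (x * y).v = y.x1 • x.v + x.x2 • y.v + cross x.u y.u := rfl
@[simp] lemma mul_x2' (x y : SplitOctonion F) :
    (x * y).x2 = x.x2 * y.x2 + dot x.v y.u := rfl

@[simp] lemma one_x1' : (1 : SplitOctonion F).x1 = 1 := rfl
@[simp] lemma one_u' : (1 : SplitOctonion F).u = 0 := rfl
@[simp] lemma one_v' : (1 : SplitOctonion F).v = 0 := rfl
@[simp] lemma one_x2' : (1 : SplitOctonion F).x2 = 1 := rfl

@[simp] lemma dot_zero_left (w : Fin 3 → F) : dot 0 w = 0 := by simp [dot]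
@[simp] lemma dot_zero_right (w : Fin 3 → F) : dot w 0 = 0 := by simp [dot]
@[simp] lemma dot_smul_left (a : F) (w z : Fin 3 → F) : dot (a • w) z = a * dot w z := by
  simp [dot]; ring
@[simp] lemma cross_zero_left (w : Fin 3 → F) : cross 0 w = 0 := by
  funext i; fin_cases i <;> simp [cross]
@[simp] lemma cross_zero_right (w : Fin 3 → F) : cross w 0 = 0 := by
  funext i; fin_cases i <;> simp [cross]
@[simp] lemma cross_smul_self (a : F) (w : Fin 3 → F) : cross (a • w) w = 0 := by
  funext i; fin_cases i <;> (simp [cross]; ring)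

lemma pow_zero' (x : SplitOctonion F) : x ^ (0 : ℕ) = 1 := rfl
lemma pow_succ' (x : SplitOctonion F) (k : ℕ) : x ^ (k + 1) = x ^ k * x := rfl

lemma dot_comm (w z : Fin 3 → F) : dot w z = dot z w := by simp [dot]; ring

lemma smul_add_smul_one_mul (a b : F) (x : SplitOctonion F) :
    (a • x + b • 1) * x = (a * trO x + b) • x + (-(a * normO x)) • 1 := by
  ext <;> simp [trO, normO] <;> (try rw [dot_comm x.v x.u]) <;> ring

lemma pow_span (x : SplitOctonion F) : ∀ k : ℕ, ∃ a b : F, x ^ k = a • x + b • 1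
  | 0 => ⟨0, 1, by simp [pow_zero']⟩
  | (k + 1) => by
    obtain ⟨a, b, h⟩ := pow_span x k
    exact ⟨a * trO x + b, -(a * normO x), by
      rw [pow_succ', h, smul_add_smul_one_mul]⟩

/-- The first-coordinate projection as a linear map. -/
def projx1 : SplitOctonion F →ₗ[F] F where
  toFun x := x.x1
  map_add' _ _ := rfl
  map_smul' _ _ := rfl

def projx2 : SplitOctonion F →ₗ[F] F where
  toFun x := x.x2
  map_add' _ _ := rfl
  map_smul' _ _ := rfl

def proju : SplitOctonion F →ₗ[F] (Fin 3 → F) where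
  toFun x := x.u
  map_add' _ _ := rfl
  map_smul' _ _ := rfl

def projv : SplitOctonion F →ₗ[F] (Fin 3 → F) where
  toFun x := x.v
  map_add' _ _ := rfl
  map_smul' _ _ := rfl

lemma peval_x1 (f : Polynomial F) (x : SplitOctonion F) :
    (peval f x).x1 = ∑ i ∈ f.support, f.coeff i * (x ^ i).x1 := by
  rw [peval, Polynomial.sum_def,
    show ∀ z : SplitOctonion F, z.x1 = projx1 z from fun _ => rfl, map_sum]
  simp [projx1]

lemma peval_x2 (f : Polynomial F) (x : SplitOctonion F) :
    (peval f x).x2 = ∑ i ∈ f.support, f.coeff i * (x ^ i).x2 := by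
  rw [peval, Polynomial.sum_def,
    show ∀ z : SplitOctonion F, z.x2 = projx2 z from fun _ => rfl, map_sum]
  simp [projx2]

lemma peval_u (f : Polynomial F) (x : SplitOctonion F) :
    (peval f x).u = ∑ i ∈ f.support, f.coeff i • (x ^ i).u := by
  rw [peval, Polynomial.sum_def,
    show ∀ z : SplitOctonion F, z.u = proju z from fun _ => rfl, map_sum]
  simp [proju]

lemma peval_v (f : Polynomial F) (x : SplitOctonion F) :
    (peval f x).v = ∑ i ∈ f.support, f.coeff i • (x ^ i).v := by
  rw [peval, Polynomial.sum_def,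
    show ∀ z : SplitOctonion F, z.v = projv z from fun _ => rfl, map_sum]
  simp [projv]

lemma eval_eq_support_sum (f : Polynomial F) (a : F) :
    f.eval a = ∑ i ∈ f.support, f.coeff i * a ^ i := by
  rw [Polynomial.eval_eq_sum, Polynomial.sum_def]

lemma peval_span (f : Polynomial F) (x : SplitOctonion F) :
    ∃ a b : F, peval f x = a • x + b • 1 := by
  have h : peval f x ∈ Submodule.span F ({x, 1} : Set (SplitOctonion F)) := by
    rw [peval, Polynomial.sum_def]
    refine Submodule.sum_mem _ fun i _ => ?_
    obtain ⟨a, b, h⟩ := pow_span x i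
    rw [h, smul_add, smul_smul, smul_smul]
    exact Submodule.add_mem _
      (Submodule.smul_mem _ _ (Submodule.subset_span (Set.mem_insert _ _)))
      (Submodule.smul_mem _ _ (Submodule.subset_span
        (Set.mem_insert_of_mem _ rfl)))
  rw [Submodule.mem_span_pair] at h
  obtain ⟨a, b, h⟩ := h
  exact ⟨a, b, h.symm⟩

/-- Diagonal octonion. -/
def diag (a b : F) : SplitOctonion F := ⟨a, 0, 0, b⟩

@[simp] lemma diag_x1 (a b : F) : (diag a b).x1 = a := rfl
@[simp] lemma diag_u (a b : F) : (diag a b).u = 0 := rfl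
@[simp] lemma diag_v (a b : F) : (diag a b).v = 0 := rfl
@[simp] lemma diag_x2 (a b : F) : (diag a b).x2 = b := rfl

lemma diag_mul (a b a' b' : F) : diag a b * diag a' b' = diag (a * a') (b * b') := by
  ext <;> simp

lemma diag_pow (a b : F) : ∀ k : ℕ, (diag a b) ^ k = diag (a ^ k) (b ^ k)
  | 0 => by rw [pow_zero', pow_zero, pow_zero]; rfl
  | (k + 1) => by
    rw [pow_succ', diag_pow a b k, diag_mul, pow_succ, pow_succ]

lemma peval_diag (f : Polynomial F) (a b : F) :
    peval f (diag a b) = diag (f.eval a) (f.eval b) := by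
  ext <;> simp [peval_x1, peval_x2, peval_u, peval_v, diag_pow, eval_eq_support_sum]

lemma IsAlgAut.map_pow {g : SplitOctonion F ≃ₗ[F] SplitOctonion F} (hg : IsAlgAut g)
    (x : SplitOctonion F) : ∀ k : ℕ, g (x ^ k) = (g x) ^ k
  | 0 => by rw [pow_zero', pow_zero']; exact hg.1
  | (k + 1) => by rw [pow_succ', pow_succ', hg.2, hg.map_pow x k]

lemma IsAlgAut.map_peval {g : SplitOctonion F ≃ₗ[F] SplitOctonion F} (hg : IsAlgAut g)
    (f : Polynomial F) (x : SplitOctonion F) : g (peval f x) = peval f (g x) := by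
  rw [peval, peval, Polynomial.sum_def, Polynomial.sum_def, map_sum]
  exact Finset.sum_congr rfl fun i _ => by rw [map_smul, hg.map_pow]

end SplitOctonion
open SplitOctonion Polynomial in
/-- if `c` is conjugate to `γ₁·e₁ + γ₂·e₂` with `γ₁ ≠ γ₂`, then
`f(x) = c` has at least one and at most `n²` solutions. -/
theorem solutions_nonempty_and_card_le_of_conjugate_diag {F : Type*} [Field F] [IsAlgClosed F]
    (f : Polynomial F) (hf : f ≠ 0) (hdeg : 1 < f.natDegree) (hf0 : f.coeff 0 = 0)
    (c : SplitOctonion F)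
    (hc : ∃ γ₁ γ₂ : F, γ₁ ≠ γ₂ ∧ ∃ g : SplitOctonion F ≃ₗ[F] SplitOctonion F, IsAlgAut g ∧
      g c = γ₁ • (e1 : SplitOctonion F) + γ₂ • e2) :
    {x : SplitOctonion F | peval f x = c}.Nonempty ∧
      {x : SplitOctonion F | peval f x = c}.Finite ∧
      {x : SplitOctonion F | peval f x = c}.ncard ≤ f.natDegree ^ 2 := by
  classical
  obtain ⟨γ₁, γ₂, hγ, g, hg, hgc⟩ := hc
  have hd : g c = diag γ₁ γ₂ := by
    rw [hgc]; ext <;> simp [e1, e2, diag]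
  have hne : ∀ γ : F, f - Polynomial.C γ ≠ 0 := by
    intro γ h
    have h2 : (f - Polynomial.C γ).natDegree = f.natDegree := Polynomial.natDegree_sub_C
    rw [h] at h2
    simp only [Polynomial.natDegree_zero] at h2
    omega
  have hroot : ∀ γ : F, ∃ lam : F, f.eval lam = γ := by
    intro γ
    have hdeg' : (f - Polynomial.C γ).degree ≠ 0 := by
      intro h
      have h2 : (f - Polynomial.C γ).natDegree = 0 :=
        Polynomial.natDegree_eq_zero_iff_degree_le_zero.2 h.le
      rw [Polynomial.natDegree_sub_C] at h2
      omega
    obtain ⟨lam, hlam⟩ := IsAlgClosed.exists_root _ hdeg'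
    exact ⟨lam, by simpa [Polynomial.IsRoot, sub_eq_zero] using hlam⟩
  have key : ∀ x : SplitOctonion F, peval f x = c →
      (g x).u = 0 ∧ (g x).v = 0 ∧ f.eval (g x).x1 = γ₁ ∧ f.eval (g x).x2 = γ₂ := by
    intro x hx
    have hy : peval f (g x) = diag γ₁ γ₂ := by
      rw [← hg.map_peval, hx, hd]
    obtain ⟨a, b, hab⟩ := peval_span f (g x)
    rw [hy] at hab
    have h1 : γ₁ = a * (g x).x1 + b := by
      have := congrArg SplitOctonion.x1 hab; simpa using this
    have h2 : γ₂ = a * (g x).x2 + b := by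
      have := congrArg SplitOctonion.x2 hab; simpa using this
    have ha : a ≠ 0 := by
      intro h
      exact hγ (by rw [h1, h2, h, zero_mul, zero_mul])
    have hu : (g x).u = 0 := by
      have h3 : (0 : Fin 3 → F) = a • (g x).u := by
        have := congrArg SplitOctonion.u hab; simpa using this
      rcases smul_eq_zero.1 h3.symm with h | h
      · exact absurd h ha
      · exact h
    have hv : (g x).v = 0 := by
      have h3 : (0 : Fin 3 → F) = a • (g x).v := by
        have := congrArg SplitOctonion.v hab; simpa using this
      rcases smul_eq_zero.1 h3.symm with h | h
      · exact absurd h ha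
      · exact h
    have hyd : g x = diag (g x).x1 (g x).x2 := by
      ext <;> simp [hu, hv, diag]
    rw [hyd, peval_diag] at hy
    exact ⟨hu, hv, congrArg SplitOctonion.x1 hy, congrArg SplitOctonion.x2 hy⟩
  obtain ⟨l1, hl1⟩ := hroot γ₁
  obtain ⟨l2, hl2⟩ := hroot γ₂
  have hnonempty : {x : SplitOctonion F | peval f x = c}.Nonempty := by
    refine ⟨g.symm (diag l1 l2), ?_⟩
    show peval f (g.symm (diag l1 l2)) = c
    apply g.injective
    rw [hg.map_peval, g.apply_symm_apply, peval_diag, hl1, hl2, hd]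
  set X := {x : SplitOctonion F | peval f x = c} with hX
  set s₁ : Finset F := (f - Polynomial.C γ₁).roots.toFinset with hs₁
  set s₂ : Finset F := (f - Polynomial.C γ₂).roots.toFinset with hs₂
  have hmap : ∀ x ∈ X, ((g x).x1, (g x).x2) ∈ (s₁ ×ˢ s₂ : Finset (F × F)) := by
    intro x hx
    obtain ⟨_, _, e1', e2'⟩ := key x hx
    simp [hs₁, hs₂, Finset.mem_product, Multiset.mem_toFinset,
      Polynomial.mem_roots (hne γ₁), Polynomial.mem_roots (hne γ₂),
      Polynomial.IsRoot, sub_eq_zero, e1', e2', hne γ₁, hne γ₂]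
  have hinj : Set.InjOn (fun x => ((g x).x1, (g x).x2)) X := by
    intro x hx x' hx' hxy
    obtain ⟨u1, v1, _, _⟩ := key x hx
    obtain ⟨u2, v2, _, _⟩ := key x' hx'
    apply g.injective
    have h1 := congrArg Prod.fst hxy
    have h2 := congrArg Prod.snd hxy
    simp only at h1 h2
    ext
    · exact h1
    · rw [u1, u2]
    · rw [v1, v2]
    · exact h2
  have himg : (fun x => ((g x).x1, (g x).x2)) '' X ⊆ ↑(s₁ ×ˢ s₂) := by
    rintro _ ⟨x, hx, rfl⟩; exact hmap x hx
  have hfinimg : ((fun x => ((g x).x1, (g x).x2)) '' X).Finite :=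
    Set.Finite.subset (Finset.finite_toSet _) himg
  have hfin : X.Finite := Set.Finite.of_finite_image hfinimg hinj
  have hcard1 : s₁.card ≤ f.natDegree := by
    refine le_trans (Multiset.toFinset_card_le _) ?_
    have := Polynomial.card_roots' (f - Polynomial.C γ₁)
    rwa [Polynomial.natDegree_sub_C] at this
  have hcard2 : s₂.card ≤ f.natDegree := by
    refine le_trans (Multiset.toFinset_card_le _) ?_
    have := Polynomial.card_roots' (f - Polynomial.C γ₂)
    rwa [Polynomial.natDegree_sub_C] at this
  refine ⟨hnonempty, hfin, ?_⟩
  calc X.ncard = ((fun x => ((g x).x1, (g x).x2)) '' X).ncard :=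
        (Set.ncard_image_of_injOn hinj).symm
    _ ≤ (↑(s₁ ×ˢ s₂) : Set (F × F)).ncard :=
        Set.ncard_le_ncard himg (Finset.finite_toSet _)
    _ = (s₁ ×ˢ s₂).card := Set.ncard_coe_finset _
    _ = s₁.card * s₂.card := Finset.card_product _ _
    _ ≤ f.natDegree * f.natDegree := Nat.mul_le_mul hcard1 hcard2
    _ = f.natDegree ^ 2 := (sq f.natDegree).symm
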